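/- Fix ε₀ ∈ (0,1), γ ∈ (0,1), p₀ ≤ p₁ ∈ [0,1] with p = p₁ - p₀, and let T = ⌈(1/γ)(ln(2(1+γ)²/(ε₀γ²)) + ln ln(2(1+γ)²/(ε₀γ²)))⌉. Let a = (1-γ)(1-p₀), b = (1-γ)(1-p₁), and define P = ∑_{j=1}^{T}(1-γ)^{j-1}γ((1-p₀)^j - (1-p₁)^j) + (1-γ)^T((1-p₀)^T - (1-p₁)^T). Then (1-ε₀)·γp/((p₀(1-γ)+γ)(p₁(1-γ)+γ)) ≤ P ≤ (1+ε₀)·γp/((p₀(1-γ)+γ)(p₁(1-γ)+γ)). -/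

import Mathlib

lemma powA (x y c : ℝ) (hy : 0 ≤ y) (hxy : y ≤ x) (hc : x ≤ c) (n : ℕ) :
    x ^ (n+1) - y ^ (n+1) ≤ ((n:ℝ)+1) * (x - y) * c ^ n := by
  induction n with
  | zero => norm_num
  | succ n ih =>
    have hx0 : 0 ≤ x := hy.trans hxy
    have hc0 : 0 ≤ c := hx0.trans hc
    have h1 : 0 ≤ x ^ (n+1) - y ^ (n+1) :=
      sub_nonneg.2 (pow_le_pow_left₀ hy hxy _)
    have hyn : y ^ (n+1) ≤ c ^ (n+1) := pow_le_pow_left₀ hy (hxy.trans hc) _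
    have hcn : (0:ℝ) ≤ c ^ n := pow_nonneg hc0 n
    have hcn1 : (0:ℝ) ≤ c ^ (n+1) := pow_nonneg hc0 _
    have key : x ^ (n+2) - y ^ (n+2) = x * (x^(n+1) - y^(n+1)) + (x - y) * y^(n+1) := by ring
    have h2 : x * (x^(n+1) - y^(n+1)) ≤ c * (((n:ℝ)+1) * (x - y) * c ^ n) :=
      le_trans (mul_le_mul_of_nonneg_right hc h1) (mul_le_mul_of_nonneg_left ih hc0)
    have h3 : (x - y) * y^(n+1) ≤ (x - y) * c^(n+1) :=
      mul_le_mul_of_nonneg_left hyn (sub_nonneg.2 hxy)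
    have hcs : c ^ (n+1) = c ^ n * c := pow_succ c n
    push_cast
    calc x^(n+1+1) - y^(n+1+1) = x*(x^(n+1)-y^(n+1)) + (x-y)*y^(n+1) := by ring
    _ ≤ c*(((n:ℝ)+1)*(x-y)*c^n) + (x-y)*c^(n+1) := by linarith
    _ = ((n:ℝ)+1+1)*(x-y)*c^(n+1) := by rw [hcs]; ring

lemma lemB (q : ℝ) (h0 : 0 ≤ q) (h1 : q ≤ 1) (n : ℕ) :
    ((n:ℝ)+1) * q * (1-q)^n ≤ 1 := by
  have hb : 1 + (n:ℝ) * q ≤ (1+q)^n := one_add_mul_le_pow (by linarith) n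
  have h2 : (0:ℝ) ≤ (1-q)^n := pow_nonneg (by linarith) n
  have h4 : (1-q)^n * (1+q)^n ≤ 1 := by
    rw [← mul_pow]
    calc ((1-q)*(1+q))^n ≤ 1^n := pow_le_pow_left₀ (by nlinarith) (by nlinarith) n
    _ = 1 := one_pow n
  calc ((n:ℝ)+1) * q * (1-q)^n ≤ (1 + (n:ℝ)*q) * (1-q)^n := by nlinarith
  _ ≤ (1+q)^n * (1-q)^n := by nlinarith
  _ ≤ 1 := by linarith [h4]

lemma lemT (ε₀ γ : ℝ) (hε0 : 0 < ε₀) (hε1 : ε₀ < 1) (hγ0 : 0 < γ) (hγ1 : γ < 1) (T : ℕ)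
    (hT : T = ⌈(1 / γ) * (Real.log (2 * (1 + γ) ^ 2 / (ε₀ * γ ^ 2)) +
      Real.log (Real.log (2 * (1 + γ) ^ 2 / (ε₀ * γ ^ 2))))⌉₊) :
    1 ≤ T ∧ (T:ℝ) * (1-γ)^T ≤ ε₀ * γ / (1+γ)^2 := by
  set C := 2 * (1 + γ) ^ 2 / (ε₀ * γ ^ 2) with hC
  have hCpos : 0 < C := by rw [hC]; positivity
  have hC8 : 8 ≤ C := by
    rw [hC, le_div_iff₀ (by positivity)]
    nlinarith
  have hexp2 : Real.exp 2 ≤ 8 := by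
    have h1 : Real.exp 2 = Real.exp 1 * Real.exp 1 := by
      rw [← Real.exp_add]; norm_num
    nlinarith [Real.exp_one_lt_d9, Real.exp_pos 1]
  have hlogC2 : 2 ≤ Real.log C := by
    rw [Real.le_log_iff_exp_le hCpos]; linarith
  have hlogC0 : 0 < Real.log C := by linarith
  have hll : Real.log (Real.log C) ≤ Real.log C - 1 :=
    Real.log_le_sub_one_of_pos hlogC0
  have hll0 : 0 < Real.log (Real.log C) := Real.log_pos (by linarith)
  set L := Real.log C + Real.log (Real.log C) with hL
  have hL2 : 2 ≤ L := by rw [hL]; linarith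
  have hT1 : 1 ≤ T := by
    rw [hT]
    rw [Nat.one_le_iff_ne_zero, ← Nat.pos_iff_ne_zero, Nat.ceil_pos]
    positivity
  have hceil := Nat.le_ceil ((1/γ) * L)
  rw [← hT] at hceil
  have hTge : L ≤ γ * T := by
    have := mul_le_mul_of_nonneg_left hceil (le_of_lt hγ0)
    field_simp at this
    linarith [this]
  have hceil2 : (T:ℝ) < (1/γ) * L + 1 := by
    rw [hT]
    exact Nat.ceil_lt_add_one (by positivity)
  have hTle : (T:ℝ) ≤ (L + 1) / γ := by
    have heq : 1/γ * L + 1 = (L + γ)/γ := by field_simp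
    rw [heq, lt_div_iff₀ hγ0] at hceil2
    rw [le_div_iff₀ hγ0]
    linarith
  have hexpL : Real.exp (-L) = 1 / (C * Real.log C) := by
    rw [Real.exp_neg, hL, Real.exp_add, Real.exp_log hCpos, Real.exp_log hlogC0, one_div]
  have hpow : (1-γ)^T ≤ Real.exp (-(γ * T)) := by
    calc (1-γ)^T ≤ (Real.exp (-γ))^T := by
          apply pow_le_pow_left₀ (by linarith)
          linarith [Real.add_one_le_exp (-γ)]
    _ = Real.exp (-(γ * T)) := by
          rw [← Real.exp_nat_mul]; ring_nf
  have hexpmono : Real.exp (-(γ * T)) ≤ Real.exp (-L) :=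
    Real.exp_le_exp.2 (by linarith)
  have hTKey : (T:ℝ) * (1-γ)^T ≤ ((L+1)/γ) * (1/(C * Real.log C)) := by
    have h1 : (0:ℝ) ≤ (1-γ)^T := pow_nonneg (by linarith) T
    have h2 : (1-γ)^T ≤ 1/(C * Real.log C) := by
      rw [← hexpL]; exact hpow.trans hexpmono
    have h3 : (0:ℝ) ≤ (T:ℝ) := Nat.cast_nonneg T
    exact mul_le_mul hTle h2 h1 (by positivity)
  refine ⟨hT1, ?_⟩
  have hL1 : L + 1 ≤ 2 * Real.log C := by rw [hL]; linarith
  have hfin : ((L+1)/γ) * (1/(C * Real.log C)) ≤ ε₀ * γ / (1+γ)^2 := by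
    have key : 2/(γ*C) = ε₀ * γ / (1+γ)^2 := by
      rw [hC]; field_simp
    rw [← key]
    rw [div_mul_div_comm, div_le_div_iff₀ (by positivity) (by positivity)]
    have : (L+1) * (γ * C) ≤ 2 * Real.log C * (γ * C) := by
      apply mul_le_mul_of_nonneg_right hL1 (by positivity)
    nlinarith [this]
  linarith [hTKey, hfin]


set_option maxHeartbeats 1000000 in
/-- Fix `ε₀, γ ∈ (0,1)`, `0 ≤ p₀ ≤ p₁ ≤ 1` with `p = p₁ - p₀`, and let
`T = ⌈(1/γ)(ln(2(1+γ)²/(ε₀γ²)) + ln ln(2(1+γ)²/(ε₀γ²)))⌉`.  Then the probability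
`P = ∑_{j=1}^{T}(1-γ)^{j-1}γ((1-p₀)^j - (1-p₁)^j) + (1-γ)^T((1-p₀)^T - (1-p₁)^T)`
that the hard-stopping best-of algorithm outputs `(x,q)` satisfies
`(1-ε₀)·γp/((p₀(1-γ)+γ)(p₁(1-γ)+γ)) ≤ P ≤ (1+ε₀)·γp/((p₀(1-γ)+γ)(p₁(1-γ)+γ))`. -/
theorem stmt19 (ε₀ γ p₀ p₁ : ℝ)
    (hε₀ : ε₀ ∈ Set.Ioo (0 : ℝ) 1) (hγ : γ ∈ Set.Ioo (0 : ℝ) 1)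
    (h0 : 0 ≤ p₀) (h01 : p₀ ≤ p₁) (h1 : p₁ ≤ 1)
    (T : ℕ)
    (hT : T = ⌈(1 / γ) * (Real.log (2 * (1 + γ) ^ 2 / (ε₀ * γ ^ 2)) +
      Real.log (Real.log (2 * (1 + γ) ^ 2 / (ε₀ * γ ^ 2))))⌉₊) :
    (1 - ε₀) * (γ * (p₁ - p₀) / ((p₀ * (1 - γ) + γ) * (p₁ * (1 - γ) + γ))) ≤
      (∑ j ∈ Finset.range T, (1 - γ) ^ j * γ * ((1 - p₀) ^ (j + 1) - (1 - p₁) ^ (j + 1))) +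
        (1 - γ) ^ T * ((1 - p₀) ^ T - (1 - p₁) ^ T) ∧
    (∑ j ∈ Finset.range T, (1 - γ) ^ j * γ * ((1 - p₀) ^ (j + 1) - (1 - p₁) ^ (j + 1))) +
        (1 - γ) ^ T * ((1 - p₀) ^ T - (1 - p₁) ^ T) ≤
      (1 + ε₀) * (γ * (p₁ - p₀) / ((p₀ * (1 - γ) + γ) * (p₁ * (1 - γ) + γ))) := by
  obtain ⟨hε0, hε1⟩ := hε₀
  obtain ⟨hγ0, hγ1⟩ := hγ
  obtain ⟨hT1, hK⟩ := lemT ε₀ γ hε0 hε1 hγ0 hγ1 T hT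
  clear hT
  -- abbreviations
  have hA : 0 < p₀ * (1 - γ) + γ := by nlinarith
  have hB : 0 < p₁ * (1 - γ) + γ := by nlinarith
  have hb0 : (0:ℝ) ≤ (1 - γ) * (1 - p₁) := by nlinarith
  have hba : (1 - γ) * (1 - p₁) ≤ (1 - γ) * (1 - p₀) := by nlinarith
  have ha1 : (1 - γ) * (1 - p₀) ≤ 1 - γ := by nlinarith
  -- closed form of the probability
  have hsum : (∑ j ∈ Finset.range T, (1 - γ) ^ j * γ * ((1 - p₀) ^ (j + 1) - (1 - p₁) ^ (j + 1)))
      = γ * (1 - p₀) * ((((1 - γ) * (1 - p₀)) ^ T - 1) / ((1 - γ) * (1 - p₀) - 1))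
        - γ * (1 - p₁) * ((((1 - γ) * (1 - p₁)) ^ T - 1) / ((1 - γ) * (1 - p₁) - 1)) := by
    have hcong : ∀ j ∈ Finset.range T,
        (1 - γ) ^ j * γ * ((1 - p₀) ^ (j + 1) - (1 - p₁) ^ (j + 1))
          = γ * (1 - p₀) * ((1 - γ) * (1 - p₀)) ^ j - γ * (1 - p₁) * ((1 - γ) * (1 - p₁)) ^ j := by
      intro j _
      rw [mul_pow, mul_pow, pow_succ, pow_succ]
      ring
    rw [Finset.sum_congr rfl hcong, Finset.sum_sub_distrib, ← Finset.mul_sum, ← Finset.mul_sum,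
      geom_sum_eq (by nlinarith : (1 - γ) * (1 - p₀) ≠ 1),
      geom_sum_eq (by nlinarith : (1 - γ) * (1 - p₁) ≠ 1)]
  have htail : (1 - γ) ^ T * ((1 - p₀) ^ T - (1 - p₁) ^ T)
      = ((1 - γ) * (1 - p₀)) ^ T - ((1 - γ) * (1 - p₁)) ^ T := by
    rw [mul_pow, mul_pow]; ring
  have hP : (∑ j ∈ Finset.range T, (1 - γ) ^ j * γ * ((1 - p₀) ^ (j + 1) - (1 - p₁) ^ (j + 1))) +
        (1 - γ) ^ T * ((1 - p₀) ^ T - (1 - p₁) ^ T)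
      = (γ * (p₁ - p₀) + (p₀ * ((1 - γ) * (1 - p₀)) ^ T * (p₁ * (1 - γ) + γ)
          - p₁ * ((1 - γ) * (1 - p₁)) ^ T * (p₀ * (1 - γ) + γ)))
        / ((p₀ * (1 - γ) + γ) * (p₁ * (1 - γ) + γ)) := by
    rw [hsum, htail]
    have h1 : (1 - γ) * (1 - p₀) - 1 ≠ 0 := by nlinarith
    have h2 : (1 - γ) * (1 - p₁) - 1 ≠ 0 := by nlinarith
    rw [show (1 - γ) * (1 - p₀) - 1 = -(p₀ * (1 - γ) + γ) by ring,
      show (1 - γ) * (1 - p₁) - 1 = -(p₁ * (1 - γ) + γ) by ring]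
    have h3 : p₀ * (1 - γ) + γ ≠ 0 := hA.ne'
    have h4 : p₁ * (1 - γ) + γ ≠ 0 := hB.ne'
    generalize hAd : p₀ * (1 - γ) + γ = A at h3 ⊢
    generalize hBd : p₁ * (1 - γ) + γ = B at h4 ⊢
    field_simp
    subst hAd hBd
    ring
  -- bounds on the error term N
  obtain ⟨T', rfl⟩ := Nat.exists_eq_succ_of_ne_zero (by omega : T ≠ 0)
  simp only [Nat.succ_eq_add_one] at hK hP hsum htail hT1 ⊢
  push_cast at hK
  have hq : (0:ℝ) ≤ p₁ - p₀ := by linarith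
  have hpw0 : (0:ℝ) ≤ (1 - γ) ^ (T' + 1) := pow_nonneg (by linarith) _
  have hD0 : (0:ℝ) ≤ ((1 - γ) * (1 - p₀)) ^ (T' + 1) - ((1 - γ) * (1 - p₁)) ^ (T' + 1) :=
    sub_nonneg.2 (pow_le_pow_left₀ hb0 hba _)
  have hD1 := powA _ _ (1 - γ) hb0 hba ha1 T'
  have hD2 := powA _ _ ((1 - γ) * (1 - p₀)) hb0 hba le_rfl T'
  have hDK : ((1 - γ) * (1 - p₀)) ^ (T' + 1) - ((1 - γ) * (1 - p₁)) ^ (T' + 1)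
      ≤ (p₁ - p₀) * (ε₀ * γ / (1 + γ) ^ 2) := by
    have heq : ((T':ℝ) + 1) * ((1 - γ) * (1 - p₀) - (1 - γ) * (1 - p₁)) * (1 - γ) ^ T'
        = (p₁ - p₀) * (((T':ℝ) + 1) * (1 - γ) ^ (T' + 1)) := by rw [pow_succ]; ring
    rw [heq] at hD1
    have : (p₁ - p₀) * (((T':ℝ) + 1) * (1 - γ) ^ (T' + 1)) ≤ (p₁ - p₀) * (ε₀ * γ / (1 + γ) ^ 2) :=
      mul_le_mul_of_nonneg_left hK hq
    linarith
  have hB2 : ((T':ℝ) + 1) * p₀ * (1 - p₀) ^ T' ≤ 1 := lemB p₀ h0 (by linarith) T'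
  have hp0D : p₀ * (((1 - γ) * (1 - p₀)) ^ (T' + 1) - ((1 - γ) * (1 - p₁)) ^ (T' + 1))
      ≤ (p₁ - p₀) * (1 - γ) ^ (T' + 1) := by
    have step := mul_le_mul_of_nonneg_left hD2 h0
    have heq : p₀ * (((T':ℝ) + 1) * ((1 - γ) * (1 - p₀) - (1 - γ) * (1 - p₁))
          * ((1 - γ) * (1 - p₀)) ^ T')
        = ((p₁ - p₀) * (1 - γ) ^ (T' + 1)) * (((T':ℝ) + 1) * p₀ * (1 - p₀) ^ T') := by
      rw [mul_pow, pow_succ]; ring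
    rw [heq] at step
    have h2 : ((p₁ - p₀) * (1 - γ) ^ (T' + 1)) * (((T':ℝ) + 1) * p₀ * (1 - p₀) ^ T')
        ≤ ((p₁ - p₀) * (1 - γ) ^ (T' + 1)) * 1 :=
      mul_le_mul_of_nonneg_left hB2 (by positivity)
    calc p₀ * (((1 - γ) * (1 - p₀)) ^ (T' + 1) - ((1 - γ) * (1 - p₁)) ^ (T' + 1))
        ≤ ((p₁ - p₀) * (1 - γ) ^ (T' + 1)) * (((T':ℝ) + 1) * p₀ * (1 - p₀) ^ T') := step
      _ ≤ (p₁ - p₀) * (1 - γ) ^ (T' + 1) := by linarith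
  have hbT : ((1 - γ) * (1 - p₁)) ^ (T' + 1) ≤ (1 - γ) ^ (T' + 1) :=
    pow_le_pow_left₀ hb0 (by nlinarith) _
  have hbT0 : (0:ℝ) ≤ ((1 - γ) * (1 - p₁)) ^ (T' + 1) := pow_nonneg hb0 _
  have hpwK : (1 - γ) ^ (T' + 1) ≤ ε₀ * γ / (1 + γ) ^ 2 := by nlinarith [hK, hpw0]
  have hεγ : 0 < ε₀ * γ := mul_pos hε0 hγ0
  have hKe : ε₀ * γ / (1 + γ) ^ 2 ≤ ε₀ * γ := by
    rw [div_le_iff₀ (by positivity)]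
    nlinarith [mul_pos hεγ hγ0, mul_pos (mul_pos hεγ hγ0) hγ0]
  have hKe2 : ε₀ * γ / (1 + γ) ^ 2 ≤ ε₀ := by
    rw [div_le_iff₀ (by positivity)]
    nlinarith [hε0, mul_pos hε0 hγ0, mul_pos (mul_pos hε0 hγ0) hγ0]
  obtain ⟨X, hX⟩ : ∃ x, ((1 - γ) * (1 - p₀)) ^ (T' + 1) = x := ⟨_, rfl⟩
  obtain ⟨Y, hY⟩ : ∃ y, ((1 - γ) * (1 - p₁)) ^ (T' + 1) = y := ⟨_, rfl⟩
  rw [hX] at hD0 hDK hp0D hP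
  rw [hY] at hD0 hDK hp0D hbT hbT0 hP
  have hABpos : 0 < (p₀ * (1 - γ) + γ) * (p₁ * (1 - γ) + γ) := mul_pos hA hB
  clear hsum htail hD1 hD2 hK hpw0 hT1 hX hY hεγ hA hB
  have hpp : p₀ * p₁ ≤ 1 := by nlinarith
  have hNid : p₀ * X * (p₁ * (1 - γ) + γ) - p₁ * Y * (p₀ * (1 - γ) + γ)
      = (1 - γ) * (p₀ * p₁ * (X - Y)) + γ * (p₀ * (X - Y)) - γ * ((p₁ - p₀) * Y) := by ring
  have hNub : p₀ * X * (p₁ * (1 - γ) + γ) - p₁ * Y * (p₀ * (1 - γ) + γ)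
      ≤ ε₀ * (γ * (p₁ - p₀)) := by
    have e2 : (1 - γ) * (p₀ * p₁ * (X - Y)) ≤ (1 - γ) * ((p₁ - p₀) * (ε₀ * γ / (1 + γ) ^ 2)) := by
      apply mul_le_mul_of_nonneg_left _ (by linarith)
      nlinarith [hDK, hD0]
    have e3 : γ * (p₀ * (X - Y)) ≤ γ * ((p₁ - p₀) * (ε₀ * γ / (1 + γ) ^ 2)) := by
      apply mul_le_mul_of_nonneg_left _ (le_of_lt hγ0)
      calc p₀ * (X - Y) ≤ (p₁ - p₀) * (1 - γ) ^ (T' + 1) := hp0D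
        _ ≤ (p₁ - p₀) * (ε₀ * γ / (1 + γ) ^ 2) := mul_le_mul_of_nonneg_left hpwK hq
    have e4 : 0 ≤ γ * ((p₁ - p₀) * Y) := by
      apply mul_nonneg (le_of_lt hγ0) (mul_nonneg hq hbT0)
    have e5 : (p₁ - p₀) * (ε₀ * γ / (1 + γ) ^ 2) ≤ (p₁ - p₀) * (ε₀ * γ) :=
      mul_le_mul_of_nonneg_left hKe hq
    nlinarith [hNid, e2, e3, e4, e5]
  have hNlb : -(ε₀ * (γ * (p₁ - p₀)))
      ≤ p₀ * X * (p₁ * (1 - γ) + γ) - p₁ * Y * (p₀ * (1 - γ) + γ) := by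
    have e1 : 0 ≤ (1 - γ) * (p₀ * p₁ * (X - Y)) :=
      mul_nonneg (by linarith) (mul_nonneg (mul_nonneg h0 (h0.trans h01)) hD0)
    have e2 : 0 ≤ γ * (p₀ * (X - Y)) :=
      mul_nonneg (le_of_lt hγ0) (mul_nonneg h0 hD0)
    have e3 : γ * ((p₁ - p₀) * Y) ≤ γ * ((p₁ - p₀) * (1 - γ) ^ (T' + 1)) := by
      apply mul_le_mul_of_nonneg_left _ (le_of_lt hγ0)
      exact mul_le_mul_of_nonneg_left hbT hq
    have e4 : γ * ((p₁ - p₀) * (1 - γ) ^ (T' + 1)) ≤ γ * ((p₁ - p₀) * ε₀) :=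
      mul_le_mul_of_nonneg_left (mul_le_mul_of_nonneg_left (hpwK.trans hKe2) hq) hγ0.le
    nlinarith [hNid, e1, e2, e3, e4]
  rw [hP]
  constructor
  · calc (1 - ε₀) * (γ * (p₁ - p₀) / ((p₀ * (1 - γ) + γ) * (p₁ * (1 - γ) + γ)))
        = ((1 - ε₀) * (γ * (p₁ - p₀))) / ((p₀ * (1 - γ) + γ) * (p₁ * (1 - γ) + γ)) := by ring
    _ ≤ (γ * (p₁ - p₀) + (p₀ * X * (p₁ * (1 - γ) + γ) - p₁ * Y * (p₀ * (1 - γ) + γ)))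
          / ((p₀ * (1 - γ) + γ) * (p₁ * (1 - γ) + γ)) := by
        apply (div_le_div_iff_of_pos_right hABpos).mpr
        nlinarith [hNlb]
  · calc (γ * (p₁ - p₀) + (p₀ * X * (p₁ * (1 - γ) + γ) - p₁ * Y * (p₀ * (1 - γ) + γ)))
          / ((p₀ * (1 - γ) + γ) * (p₁ * (1 - γ) + γ))
        ≤ ((1 + ε₀) * (γ * (p₁ - p₀))) / ((p₀ * (1 - γ) + γ) * (p₁ * (1 - γ) + γ)) := by
          apply (div_le_div_iff_of_pos_right hABpos).mpr
          nlinarith [hNub]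
    _ = (1 + ε₀) * (γ * (p₁ - p₀) / ((p₀ * (1 - γ) + γ) * (p₁ * (1 - γ) + γ))) := by ring
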